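/- arXiv:1103.1028 — 2 statements merged into one kernel-verified Lean document; each statement's English description precedes it below -/
import Mathlib

section
/- Let G be a connected graph such that for every hole C of G there exists an edge e_C ∈ E(C) that belongs to no other induced cycle of G. Then the competition number of G satisfies k(G) ≤ dim H(G) + 1. -/
open SimpleGraph

/-- A digraph (given as a relation) is acyclic if it has no directed cycle,
i.e., no vertex reaches itself by a nonempty directed walk. -/
def DigraphAcyclic {α : Type*} (D : α → α → Prop) : Prop :=
  ∀ a : α, ¬ Relation.TransGen D a a

/-- `G` is the competition graph of the digraph `D`: two distinct vertices are
adjacent iff they have a common out-neighbor. -/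
def IsCompetitionGraphOf {α : Type*} (G : SimpleGraph α) (D : α → α → Prop) : Prop :=
  ∀ x y : α, G.Adj x y ↔ x ≠ y ∧ ∃ v : α, D x v ∧ D y v

/-- The graph `G` together with `k` additional isolated vertices. -/
def addIsolated {V : Type*} (G : SimpleGraph V) (k : ℕ) : SimpleGraph (V ⊕ Fin k) :=
  SimpleGraph.fromRel (fun x y => ∃ a b : V, x = Sum.inl a ∧ y = Sum.inl b ∧ G.Adj a b)

/-- The competition number of `G`: the smallest `k` such that `G` together with
`k` isolated vertices is the competition graph of some acyclic digraph. -/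
noncomputable def competitionNumber {V : Type*} (G : SimpleGraph V) : ℕ :=
  sInf {k : ℕ | ∃ D : (V ⊕ Fin k) → (V ⊕ Fin k) → Prop,
    DigraphAcyclic D ∧ IsCompetitionGraphOf (addIsolated G k) D}

/-- A hole of `G`: an induced (chordless) cycle of length at least 4. -/
def IsHole {V : Type*} (G : SimpleGraph V) {v : V} (w : G.Walk v v) : Prop :=
  w.IsCycle ∧ 4 ≤ w.length ∧
    ∀ x y : V, x ∈ w.support → y ∈ w.support → G.Adj x y → s(x, y) ∈ w.edges

/-- An induced (chordless) cycle of `G`. -/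
def IsInducedCycle {V : Type*} (G : SimpleGraph V) {v : V} (w : G.Walk v v) : Prop :=
  w.IsCycle ∧
    ∀ x y : V, x ∈ w.support → y ∈ w.support → G.Adj x y → s(x, y) ∈ w.edges

open Classical in
/-- The characteristic vector in 𝔽₂^{E(G)} of (the edge set of) a closed walk. -/
noncomputable def cycleVec {V : Type*} (G : SimpleGraph V) {H : SimpleGraph V} {v : V}
    (w : H.Walk v v) : G.edgeSet → ZMod 2 :=
  fun e => if (e : Sym2 V) ∈ w.edges then 1 else 0

/-- The hole space of `G`: the 𝔽₂-span of the characteristic vectors of the holes. -/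
def holeSpace {V : Type*} (G : SimpleGraph V) : Submodule (ZMod 2) (G.edgeSet → ZMod 2) :=
  Submodule.span (ZMod 2)
    {f | ∃ (v : V) (w : G.Walk v v), IsHole G w ∧ f = cycleVec G w}

/-- The dimension of the hole space of `G`. -/
noncomputable def holeDim {V : Type*} (G : SimpleGraph V) : ℕ :=
  Module.finrank (ZMod 2) (holeSpace G)

/-- The edge sets of the holes of `G`; distinct holes correspond to distinct edge sets. -/
def holeEdgeSets {V : Type*} (G : SimpleGraph V) : Set (Set (Sym2 V)) :=
  {E | ∃ (v : V) (w : G.Walk v v), IsHole G w ∧ E = {e | e ∈ w.edges}}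

/-- The edge sets of the induced cycles of `G`. -/
def inducedCycleEdgeSets {V : Type*} (G : SimpleGraph V) : Set (Set (Sym2 V)) :=
  {E | ∃ (v : V) (w : G.Walk v v), IsInducedCycle G w ∧ E = {e | e ∈ w.edges}}

/-- The number of holes of `G`. -/
noncomputable def numHoles {V : Type*} (G : SimpleGraph V) : ℕ :=
  (holeEdgeSets G).ncard

/-- A graph is chordal if it has no holes. -/
def IsChordalGraph {V : Type*} (G : SimpleGraph V) : Prop :=
  ∀ (v : V) (w : G.Walk v v), ¬ IsHole G w

namespace Stmt16

variable {V : Type*}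


variable {V : Type*}

structure CNScheme (G : SimpleGraph V) (k : ℕ) where
  I : Type*
  Q : I → Finset V
  clique : ∀ i, ∀ x ∈ Q i, ∀ y ∈ Q i, x ≠ y → G.Adj x y
  cover : ∀ {x y}, G.Adj x y → ∃ i, x ∈ Q i ∧ y ∈ Q i
  prey : I → V ⊕ Fin k
  inj : Function.Injective prey
  hf : V ⊕ Fin k → ℕ
  dec : ∀ i, ∀ x ∈ Q i, hf (prey i) < hf (Sum.inl x)

theorem CNScheme.le {G : SimpleGraph V} {k : ℕ} (S : CNScheme G k) :
    competitionNumber G ≤ k := by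
  apply Nat.sInf_le
  refine ⟨fun u w => ∃ i, (∃ x, x ∈ S.Q i ∧ u = Sum.inl x) ∧ w = S.prey i, ?_, ?_⟩
  · have key : ∀ u w, Relation.TransGen
        (fun u w => ∃ i, (∃ x, x ∈ S.Q i ∧ u = Sum.inl x) ∧ w = S.prey i) u w →
        S.hf w < S.hf u := by
      intro u w hw
      induction hw with
      | single h => obtain ⟨i, ⟨x, hx, rfl⟩, rfl⟩ := h; exact S.dec i x hx
      | tail _ h ih =>
          obtain ⟨i, ⟨x, hx, rfl⟩, rfl⟩ := h
          exact lt_trans (S.dec i x hx) ih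
  
    intro a ha
    exact lt_irrefl _ (key a a ha)
  · intro u w
    rw [addIsolated, fromRel_adj]
    constructor
    · rintro ⟨huw, h | h⟩ <;> obtain ⟨a, b, rfl, rfl, hab⟩ := h
      · obtain ⟨i, hai, hbi⟩ := S.cover hab
        exact ⟨huw, S.prey i, ⟨i, ⟨a, hai, rfl⟩, rfl⟩, ⟨i, ⟨b, hbi, rfl⟩, rfl⟩⟩
      · obtain ⟨i, hai, hbi⟩ := S.cover hab
        exact ⟨huw, S.prey i, ⟨i, ⟨b, hbi, rfl⟩, rfl⟩, ⟨i, ⟨a, hai, rfl⟩, rfl⟩⟩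
    · rintro ⟨huw, v, ⟨i, ⟨x, hx, rfl⟩, rfl⟩, ⟨j, ⟨y, hy, rfl⟩, hj⟩⟩
      have : i = j := S.inj hj
      subst this
      refine ⟨huw, Or.inl ⟨x, y, rfl, rfl, ?_⟩⟩
      exact S.clique i x hx y hy (fun hxy => huw (by rw [hxy]))



open Classical

variable {V : Type*}

theorem hole_edges_sub_edgeSet {G : SimpleGraph V} {E : Set (Sym2 V)}
    (hE : E ∈ holeEdgeSets G) : E ⊆ G.edgeSet := by
  obtain ⟨v, w, _, rfl⟩ := hE
  intro e he
  exact w.edges_subset_edgeSet he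

theorem numHoles_le_holeDim [Fintype V] (G : SimpleGraph V)
    (h : ∀ E ∈ holeEdgeSets G, ∃ e ∈ E,
      ∀ E' ∈ inducedCycleEdgeSets G, E' ≠ E → e ∉ E') :
    numHoles G ≤ holeDim G := by
  classical
  haveI : Fintype (holeEdgeSets G) := (Set.toFinite _).fintype
  haveI : Fintype G.edgeSet := (Set.toFinite _).fintype
  -- choose private edges
  choose ec hec hpriv using h
  -- the vector family
  set v : holeEdgeSets G → (G.edgeSet → ZMod 2) :=
    fun E => fun e => if (e : Sym2 V) ∈ (E : Set (Sym2 V)) then 1 else 0 with hv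
  have hmem : ∀ E : holeEdgeSets G, v E ∈ holeSpace G := by
    rintro ⟨E, hE⟩
    obtain ⟨x, w, hw, hEw⟩ := hE
    apply Submodule.subset_span
    refine ⟨x, w, hw, ?_⟩
    funext e
    simp only [hv, cycleVec, hEw]
    congr 1
  have hkey : ∀ (E E' : holeEdgeSets G),
      (ec E E.2 : Sym2 V) ∈ (E' : Set (Sym2 V)) ↔ E' = E := by
    rintro ⟨E, hE⟩ ⟨E', hE'⟩
    constructor
    · intro hmem2
      by_contra hne
      have hne' : E' ≠ E := fun hh => hne (by simpa using hh)
      have : E' ∈ inducedCycleEdgeSets G := by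
        obtain ⟨x, w, hw, hEw⟩ := hE'
        exact ⟨x, w, ⟨hw.1, hw.2.2⟩, hEw⟩
      exact hpriv E hE E' this hne' hmem2
    · intro hh
      have : E' = E := by simpa using congrArg Subtype.val hh
      subst this
      exact hec E' hE
  have hli : LinearIndependent (ZMod 2) v := by
    rw [Fintype.linearIndependent_iff]
    intro g hg E
    have hedge : (ec E E.2 : Sym2 V) ∈ G.edgeSet :=
      hole_edges_sub_edgeSet E.2 (hec E E.2)
    have := congrFun hg ⟨ec E E.2, hedge⟩
    simp only [Finset.sum_apply, Pi.smul_apply, smul_eq_mul, Pi.zero_apply, hv] at this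
    rw [Finset.sum_eq_single E] at this
    · simpa [hkey E E] using this
    · intro E' _ hne
      simp [hkey E E', hne]
    · intro hE; exact absurd (Finset.mem_univ E) hE
  have hli' : LinearIndependent (ZMod 2)
      (fun E : holeEdgeSets G => (⟨v E, hmem E⟩ : holeSpace G)) := by
    apply LinearIndependent.of_comp (holeSpace G).subtype
    convert hli
    rfl
  have hcard := hli'.fintype_card_le_finrank
  rw [numHoles, ← Nat.card_coe_set_eq, Nat.card_eq_fintype_card]
  exact hcard



variable {V : Type*} {G : SimpleGraph V}

theorem edges_length_one {u w : V} (r : G.Walk u w) (h : r.length = 1) :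
    r.edges = [s(u, w)] := by
  cases r with
  | nil => simp at h
  | cons h' r' =>
    cases r' with
    | nil => simp
    | cons h'' r'' => simp [SimpleGraph.Walk.length_cons] at h

theorem exists_minpath {x y : V} (s : Set V) (X : Set (Sym2 V))
    (p0 : G.Walk x y) (hs0 : ∀ z ∈ p0.support, z ∈ s) (hX0 : ∀ e ∈ p0.edges, e ∉ X) :
    ∃ R : G.Walk x y, R.IsPath ∧ (∀ z ∈ R.support, z ∈ s) ∧ (∀ e ∈ R.edges, e ∉ X) ∧
      (∀ u w, u ∈ R.support → w ∈ R.support → G.Adj u w → s(u, w) ∉ X →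
        s(u, w) ∈ R.edges) := by
  classical
  set L : Set ℕ := {n | ∃ p : G.Walk x y,
    (∀ z ∈ p.support, z ∈ s) ∧ (∀ e ∈ p.edges, e ∉ X) ∧ p.length = n} with hL
  have hne : p0.length ∈ L := ⟨p0, hs0, hX0, rfl⟩
  obtain ⟨p, hps, hpX, hplen⟩ := Nat.sInf_mem ⟨_, hne⟩
  have hRs : ∀ z ∈ p.bypass.support, z ∈ s := fun z hz =>
    hps z (p.support_bypass_subset hz)
  have hRX : ∀ e ∈ p.bypass.edges, e ∉ X := fun e he =>
    hpX e (p.edges_bypass_subset he)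
  have hmin : ∀ q : G.Walk x y, (∀ z ∈ q.support, z ∈ s) → (∀ e ∈ q.edges, e ∉ X) →
      p.bypass.length ≤ q.length := by
    intro q hqs hqX
    calc p.bypass.length ≤ p.length := p.length_bypass_le
    _ = sInf L := hplen
    _ ≤ q.length := Nat.sInf_le ⟨q, hqs, hqX, rfl⟩
  refine ⟨p.bypass, p.bypass_isPath, hRs, hRX, ?_⟩
  set R := p.bypass with hR
  intro u w hu hw hadj hXuw
  by_contra hcon
  obtain ⟨q, r, hqr⟩ := Walk.mem_support_iff_exists_append.mp hu
  have hw' : w ∈ q.support ∨ w ∈ r.support := by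
    rw [hqr, Walk.mem_support_append_iff] at hw
    exact hw
  have hedges : R.edges = q.edges ++ r.edges := by rw [hqr, Walk.edges_append]
  have hlenR : R.length = q.length + r.length := by rw [hqr, Walk.length_append]
  have hmemR : ∀ z, (z ∈ q.support ∨ z ∈ r.support) → z ∈ R.support := by
    intro z hz
    rw [hqr, Walk.mem_support_append_iff]
    exact hz
  cases hw' with
  | inr hwr =>
    obtain ⟨r1, r2, hr⟩ := Walk.mem_support_iff_exists_append.mp hwr
    have hlen1 : 2 ≤ r1.length := by
      rcases Nat.lt_or_ge r1.length 2 with hl | hl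
      · interval_cases hh : r1.length
        · exact absurd (Walk.eq_of_length_eq_zero hh) hadj.ne
        · exfalso
          apply hcon
          rw [hedges, hr, Walk.edges_append, edges_length_one r1 hh]
          simp
      · exact hl
    set q' : G.Walk x y := q.append (Walk.cons hadj r2) with hq'
    have hq's : ∀ z ∈ q'.support, z ∈ s := by
      intro z hz
      rw [hq', Walk.mem_support_append_iff] at hz
      apply hRs
      apply hmemR
      rcases hz with hz | hz
      · exact Or.inl hz
      · rw [Walk.support_cons] at hz
        rcases List.mem_cons.mp hz with rfl | hz
        · exact Or.inr r.start_mem_support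
        · refine Or.inr ?_
          rw [hr, Walk.mem_support_append_iff]
          exact Or.inr hz
    have hq'X : ∀ e ∈ q'.edges, e ∉ X := by
      intro e he
      rw [hq', Walk.edges_append, List.mem_append] at he
      rcases he with he | he
      · exact hRX e (by rw [hedges]; exact List.mem_append_left _ he)
      · rw [Walk.edges_cons] at he
        rcases List.mem_cons.mp he with rfl | he
        · exact hXuw
        · refine hRX e ?_
          rw [hedges, hr, Walk.edges_append]
          exact List.mem_append_right _ (List.mem_append_right _ he)
    have := hmin q' hq's hq'X
    rw [hq', Walk.length_append, Walk.length_cons, hlenR, hr, Walk.length_append] at this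
    omega
  | inl hwq =>
    obtain ⟨q1, q2, hq⟩ := Walk.mem_support_iff_exists_append.mp hwq
    have hlen1 : 2 ≤ q2.length := by
      rcases Nat.lt_or_ge q2.length 2 with hl | hl
      · interval_cases hh : q2.length
        · exact absurd (Walk.eq_of_length_eq_zero hh) hadj.ne.symm
        · exfalso
          apply hcon
          rw [hedges, hq, Walk.edges_append, edges_length_one q2 hh]
          simp [Sym2.eq_swap]
      · exact hl
    set q' : G.Walk x y := q1.append (Walk.cons hadj.symm r) with hq'
    have hq's : ∀ z ∈ q'.support, z ∈ s := by
      intro z hz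
      rw [hq', Walk.mem_support_append_iff] at hz
      apply hRs
      apply hmemR
      rcases hz with hz | hz
      · refine Or.inl ?_
        rw [hq, Walk.mem_support_append_iff]
        exact Or.inl hz
      · rw [Walk.support_cons] at hz
        rcases List.mem_cons.mp hz with rfl | hz
        · exact Or.inl hwq
        · exact Or.inr hz
    have hq'X : ∀ e ∈ q'.edges, e ∉ X := by
      intro e he
      rw [hq', Walk.edges_append, List.mem_append] at he
      rcases he with he | he
      · refine hRX e ?_
        rw [hedges, hq, Walk.edges_append]
        exact List.mem_append_left _ (List.mem_append_left _ he)
      · rw [Walk.edges_cons] at he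
        rcases List.mem_cons.mp he with rfl | he
        · rw [Sym2.eq_swap]; exact hXuw
        · exact hRX e (by rw [hedges]; exact List.mem_append_right _ he)
    have := hmin q' hq's hq'X
    rw [hq', Walk.length_append, Walk.length_cons, hlenR, hq, Walk.length_append] at this
    omega



variable {V : Type*} {G : SimpleGraph V}



lemma mem_tail_support_closed {v y : V} {p : G.Walk v v} (hp : ¬ p.Nil)
    (hy : y ∈ p.support) : y ∈ p.support.tail := by
  cases p with
  | nil => simp at hp
  | cons h q =>
    rw [Walk.support_cons, List.tail_cons]
    rw [Walk.support_cons, List.mem_cons] at hy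
    rcases hy with rfl | hy
    · exact q.end_mem_support
    · exact hy

/-- From a path `R : x → y` together with the edge `s(x,y)`, we get an induced cycle,
provided `R` is chordless. -/
lemma induced_cycle_of_chordless_path {x y : V} (hxy : G.Adj x y) (R : G.Walk y x)
    (hR : R.IsPath) (he : s(x, y) ∉ R.edges)
    (hchord : ∀ u w, u ∈ R.support → w ∈ R.support → G.Adj u w → s(u, w) ≠ s(x, y) →
      s(u, w) ∈ R.edges) :
    IsInducedCycle G (Walk.cons hxy R) := by
  constructor
  · rw [Walk.cons_isCycle_iff]
    exact ⟨hR, he⟩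
  · intro u w hu hw hadj
    rw [Walk.support_cons, List.mem_cons] at hu hw
    rw [Walk.edges_cons, List.mem_cons]
    by_cases hc : s(u, w) = s(x, y)
    · exact Or.inl hc
    · have hu' : u ∈ R.support := by
        rcases hu with rfl | hu
        · exact R.end_mem_support
        · exact hu
      have hw' : w ∈ R.support := by
        rcases hw with rfl | hw
        · exact R.end_mem_support
        · exact hw
      exact Or.inr (hchord u w hu' hw' hadj hc)

theorem chordal_deleteEdges {F : Set (Sym2 V)}
    (hFpriv : ∀ f ∈ F, ∃ E ∈ holeEdgeSets G, f ∈ E ∧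
      ∀ E' ∈ inducedCycleEdgeSets G, E' ≠ E → f ∉ E')
    (hFcov : ∀ E ∈ holeEdgeSets G, ∃ f ∈ F, f ∈ E) :
    IsChordalGraph (G.deleteEdges F) := by
  classical
  intro v w hw
  obtain ⟨hcyc, hlen, hchordless⟩ := hw
  have hGe : ∀ e ∈ w.edges, e ∈ G.edgeSet := fun e he =>
    (edgeSet_mono (G.deleteEdges_le F)) (w.edges_subset_edgeSet he)
  set wG := w.transfer G hGe with hwG
  have hsup : wG.support = w.support := w.support_transfer hGe
  have hedg : wG.edges = w.edges := w.edges_transfer hGe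
  have hcycG : wG.IsCycle := hcyc.transfer hGe
  by_cases hch : ∀ x y : V, x ∈ wG.support → y ∈ wG.support → G.Adj x y → s(x, y) ∈ wG.edges
  · -- `wG` is a hole of `G`, but all its edges survive deletion: contradiction with `hFcov`
    have hhole : IsHole G wG := ⟨hcycG, by rw [Walk.length_transfer]; exact hlen, hch⟩
    obtain ⟨f, hfF, hfE⟩ := hFcov {e | e ∈ wG.edges} ⟨v, wG, hhole, rfl⟩
    have : f ∈ (G.deleteEdges F).edgeSet := w.edges_subset_edgeSet (by
      rw [← hedg]; exact hfE)
    rw [edgeSet_deleteEdges] at this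
    exact this.2 hfF
  · push_neg at hch
    obtain ⟨x, y, hxs, hys0, hxy, hnotedge⟩ := hch
    have hxyne : x ≠ y := hxy.ne
    -- the chord is a deleted edge
    have hxyF : s(x, y) ∈ F := by
      by_contra hcF
      have : (G.deleteEdges F).Adj x y := by rw [deleteEdges_adj]; exact ⟨hxy, hcF⟩
      have := hchordless x y (by rwa [hsup] at hxs) (by rwa [hsup] at hys0) this
      rw [← hedg] at this
      exact hnotedge this
    obtain ⟨E₀, hE₀, hfE₀, hpriv⟩ := hFpriv _ hxyF
    -- rotate the cycle to start at x and split at y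
    have hnn : ¬ wG.Nil := by
      rw [Walk.not_nil_iff_lt_length, Walk.length_transfer]; omega
    set c := wG.rotate _ hxs with hc
    have hccyc : c.IsCycle := hcycG.rotate hxs
    have hys : y ∈ c.support := by
      have h1 : y ∈ wG.support.tail := mem_tail_support_closed hnn hys0
      have h2 := wG.support_rotate _ hxs
      exact List.mem_of_mem_tail (h2.perm.mem_iff.mpr h1)
    have hcedges : ∀ e, e ∈ c.edges ↔ e ∈ wG.edges := fun e =>
      (wG.rotate_edges _ hxs).perm.mem_iff
    set P1 := c.takeUntil y hys with hP1
    set P2 := c.dropUntil y hys with hP2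
    have hsplitc : P1.append P2 = c := c.take_spec hys
    have hP1e : ∀ e ∈ P1.edges, e ∈ wG.edges := fun e he =>
      (hcedges e).mp (c.edges_takeUntil_subset hys he)
    have hP2e : ∀ e ∈ P2.edges, e ∈ wG.edges := fun e he =>
      (hcedges e).mp (c.edges_dropUntil_subset hys he)
    have hxyP1 : ∀ e ∈ P1.edges, e ∉ ({s(x, y)} : Set (Sym2 V)) := by
      rintro e he rfl
      exact hnotedge (hP1e _ he)
    have hxyP2 : ∀ e ∈ P2.edges, e ∉ ({s(x, y)} : Set (Sym2 V)) := by
      rintro e he rfl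
      exact hnotedge (hP2e _ he)
    -- the vertex sets of the two pieces meet only in x and y
    have hint : ∀ z, z ∈ P1.support → z ∈ P2.support → z = x ∨ z = y := by
      intro z h1 h2
      by_contra hcon2
      push_neg at hcon2
      obtain ⟨hzx, hzy⟩ := hcon2
      have hcs : c.support = P1.support ++ P2.support.tail := by
        conv_lhs => rw [← hsplitc]
        exact Walk.support_append _ _
      have hxcons : c.support = x :: c.support.tail := c.support_eq_cons
      have hnodup := hccyc.2
      have hc1 : c.support.count z ≤ 1 := by
        rw [hxcons, List.count_cons_of_ne hzx.symm]
        exact List.nodup_iff_count_le_one.mp hnodup z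
      have hz2 : z ∈ P2.support.tail := by
        rcases (Walk.mem_support_iff _).mp h2 with rfl | hz
        · exact absurd rfl hzy
        · exact hz
      have hc2 : 2 ≤ c.support.count z := by
        rw [hcs, List.count_append]
        have g1 : 1 ≤ P1.support.count z := List.count_pos_iff.mpr h1 -- name?
        have g2 : 1 ≤ P2.support.tail.count z := List.count_pos_iff.mpr hz2
        omega
      omega
    -- build two induced cycles through the chord
    obtain ⟨R1, hR1p, hR1s, hR1X, hR1c⟩ := exists_minpath {z | z ∈ P1.support}
      ({s(x, y)} : Set (Sym2 V)) P1 (fun z hz => hz) hxyP1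
    obtain ⟨R2, hR2p, hR2s, hR2X, hR2c⟩ := exists_minpath {z | z ∈ P2.support}
      ({s(x, y)} : Set (Sym2 V)) P2 (fun z hz => hz) hxyP2
    have hR1e : s(x, y) ∉ R1.edges := fun hh => hR1X _ hh rfl
    have hR2e : s(x, y) ∉ R2.edges := fun hh => hR2X _ hh rfl
    -- first induced cycle: cons hxy R1.reverse? R1 : Walk x y so use reverse
    have hZ1 : IsInducedCycle G (Walk.cons hxy R1.reverse) := by
      apply induced_cycle_of_chordless_path hxy R1.reverse hR1p.reverse
        (by rwa [Walk.edges_reverse, List.mem_reverse])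
      intro u w hu hw hadj hne
      rw [Walk.support_reverse, List.mem_reverse] at hu hw
      rw [Walk.edges_reverse, List.mem_reverse]
      exact hR1c u w hu hw hadj (by simpa using hne)
    have hZ2 : IsInducedCycle G (Walk.cons hxy R2) := by
      apply induced_cycle_of_chordless_path hxy R2 hR2p hR2e
      intro u w hu hw hadj hne
      exact hR2c u w hu hw hadj (by simpa using hne)
    -- both cycles' edge sets are E₀
    have hE1 : {e | e ∈ (Walk.cons hxy R1.reverse).edges} = E₀ := by
      by_contra hne
      exact hpriv _ ⟨x, _, hZ1, rfl⟩ hne (by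
        simp only [Set.mem_setOf_eq, Walk.edges_cons, List.mem_cons]
        simp)
    have hE2 : {e | e ∈ (Walk.cons hxy R2).edges} = E₀ := by
      by_contra hne
      exact hpriv _ ⟨x, _, hZ2, rfl⟩ hne (by
        simp only [Set.mem_setOf_eq, Walk.edges_cons, List.mem_cons]
        simp)
    -- extract an interior vertex of R1
    have hR1len : 2 ≤ R1.length := by
      rcases Nat.lt_or_ge R1.length 2 with hl | hl
      · interval_cases hh : R1.length
        · exact absurd (Walk.eq_of_length_eq_zero hh) hxyne
        · exact absurd (by rw [edges_length_one R1 hh]; simp) hR1e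
      · exact hl
    -- R1 = cons h R1', interior vertex z
    cases R1 with
    | nil => simp at hR1len
    | @cons _ z _ h1 R1' =>
      have hzx : z ≠ x := by
        intro hzz
        subst hzz
        exact ((Walk.cons_isPath_iff _ _).mp hR1p).2 (by simpa using R1'.start_mem_support)
      have hzy : z ≠ y := by
        intro hzz
        subst hzz
        exact hR1e (by simp [Sym2.eq_swap])
      -- the edge s(x, z) belongs to cycle 1, hence to E₀, hence to cycle 2
      have hxz1 : s(x, z) ∈ (Walk.cons hxy (Walk.cons h1 R1').reverse).edges := by
        rw [Walk.edges_cons, Walk.edges_reverse, List.mem_cons, List.mem_reverse]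
        exact Or.inr (by simp)
      have hxz2 : s(x, z) ∈ (Walk.cons hxy R2).edges := by
        have : s(x, z) ∈ E₀ := by rw [← hE1]; exact hxz1
        rw [← hE2] at this
        exact this
      rw [Walk.edges_cons, List.mem_cons] at hxz2
      rcases hxz2 with hc | hc
      · rw [Sym2.eq_iff] at hc
        rcases hc with ⟨-, rfl⟩ | ⟨rfl, _⟩
        · exact hzy rfl
        · exact hxyne rfl
      · -- z is on R2, hence on P2; but z is also on P1, and z ∉ {x,y}
        have hz2 : z ∈ R2.support := R2.snd_mem_support_of_mem_edges hc
        have hzP2 : z ∈ P2.support := hR2s z hz2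
        have hzP1 : z ∈ P1.support := hR1s z (by simp)
        rcases hint z hzP1 hzP2 with rfl | rfl
        · exact hzx rfl
        · exact hzy rfl



variable {V : Type*} {H : SimpleGraph V}



/-- Reachability inside a set of vertices. -/
def ReachIn (H : SimpleGraph V) (s : Set V) (x y : V) : Prop :=
  ∃ p : H.Walk x y, ∀ z ∈ p.support, z ∈ s

lemma ReachIn.refl {s : Set V} {x : V} (hx : x ∈ s) : ReachIn H s x x :=
  ⟨Walk.nil, by simpa using hx⟩

lemma ReachIn.symm {s : Set V} {x y : V} (h : ReachIn H s x y) : ReachIn H s y x := by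
  obtain ⟨p, hp⟩ := h
  exact ⟨p.reverse, fun z hz => hp z (by rwa [Walk.support_reverse, List.mem_reverse] at hz)⟩

lemma ReachIn.trans {s : Set V} {x y z : V} (h1 : ReachIn H s x y) (h2 : ReachIn H s y z) :
    ReachIn H s x z := by
  obtain ⟨p, hp⟩ := h1; obtain ⟨q, hq⟩ := h2
  refine ⟨p.append q, fun u hu => ?_⟩
  rw [Walk.mem_support_append_iff] at hu
  rcases hu with hu | hu
  · exact hp u hu
  · exact hq u hu

lemma ReachIn.adj {s : Set V} {x y z : V} (h1 : ReachIn H s x y) (h2 : H.Adj y z)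
    (hz : z ∈ s) : ReachIn H s x z := by
  obtain ⟨p, hp⟩ := h1
  refine ⟨p.append (Walk.cons h2 Walk.nil), ?_⟩
  intro u hu
  rw [Walk.mem_support_append_iff] at hu
  rcases hu with hu | hu
  · exact hp u hu
  · have : u = y ∨ u = z := by simpa using hu
    rcases this with rfl | rfl
    · exact hp u p.end_mem_support
    · exact hz

lemma reachin_all {s : Set V} {x y : V} (p : H.Walk x y)
    (hp : ∀ u ∈ p.support, u ∈ s) {a : V} (ha : ReachIn H s a x) :
    ∀ z ∈ p.support, ReachIn H s a z := by
  classical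
  intro z hz
  exact ha.trans ⟨p.takeUntil z hz, fun u hu => hp u (p.support_takeUntil_subset hz hu)⟩

/-- "v is simplicial within s". -/
def SimpIn (H : SimpleGraph V) (s : Set V) (v : V) : Prop :=
  ∀ x ∈ s, ∀ y ∈ s, H.Adj v x → H.Adj v y → x = y ∨ H.Adj x y

/-- Walking from inside `A` to the separator vertex `t` yields a neighbor of `t` in `A`. -/
lemma exists_adj_of_walk {S A : Set V} {t : V}
    (hstep : ∀ z ∈ A, ∀ u, H.Adj z u → u ∈ S → u ∈ A) :
    ∀ {a' c : V} (p : H.Walk a' c), a' ∈ A → a' ≠ t → t ∈ p.support →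
      (∀ z ∈ p.support, z = t ∨ z ∈ S) → ∃ x ∈ A, H.Adj x t := by
  intro a' c p
  induction p with
  | nil =>
    intro ha hat ht _
    rw [Walk.mem_support_nil_iff] at ht
    exact absurd ht.symm hat
  | @cons u m c h q ih =>
    intro ha hat ht hsupp
    by_cases hm : m = t
    · subst hm; exact ⟨u, ha, h⟩
    · have hmq : m ∈ (Walk.cons h q).support := by
        rw [Walk.support_cons]
        exact List.mem_cons_of_mem _ q.start_mem_support
      have hmS : m ∈ S := by
        rcases hsupp m hmq with hh | hh
        · exact absurd hh hm
        · exact hh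
      have hmA : m ∈ A := hstep u ha m h hmS
      have htq : t ∈ q.support := by
        rw [Walk.support_cons, List.mem_cons] at ht
        rcases ht with rfl | ht
        · exact absurd rfl hat.symm
        · exact ht
      refine ih hmA hm htq (fun z hz => hsupp z ?_)
      rw [Walk.support_cons]
      exact List.mem_cons_of_mem _ hz

/-- Gluing two internally disjoint paths gives a cycle. -/
lemma cycle_of_two_paths {x y : V} (p : H.Walk x y) (q : H.Walk y x)
    (hp : p.IsPath) (hq : q.IsPath) (hne : x ≠ y)
    (hdisj : ∀ z, z ∈ p.support → z ∈ q.support → z = x ∨ z = y)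
    (hedisj : ∀ e, e ∈ p.edges → e ∈ q.edges → False) :
    (p.append q).IsCycle := by
  rw [Walk.isCycle_def]
  refine ⟨⟨?_⟩, ?_, ?_⟩
  · rw [Walk.edges_append]
    rw [List.nodup_append]
    exact ⟨hp.isTrail.edges_nodup, hq.isTrail.edges_nodup,
      fun e he e' he' hee => hedisj e he (hee ▸ he')⟩
  · intro hnil
    have := congrArg Walk.length hnil
    rw [Walk.length_append] at this
    simp only [Walk.length_nil] at this
    have hl : 1 ≤ p.length := by
      rcases Nat.eq_zero_or_pos p.length with h0 | h1
      · exact absurd (Walk.eq_of_length_eq_zero h0) hne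
      · exact h1
    omega
  · rw [Walk.tail_support_append, List.nodup_append]
    refine ⟨hp.support_nodup.tail, hq.support_nodup.tail, ?_⟩
    intro z hz1 z' hz2 hzz'
    subst hzz'
    have hz1' : z ∈ p.support := List.mem_of_mem_tail hz1
    have hz2' : z ∈ q.support := List.mem_of_mem_tail hz2
    rcases hdisj z hz1' hz2' with hzz | hzz
    · subst hzz
      exact absurd hz1 (by
        have := hp.support_nodup
        rw [p.support_eq_cons, List.nodup_cons] at this
        exact this.1)
    · subst hzz
      exact absurd hz2 (by
        have := hq.support_nodup
        rw [q.support_eq_cons, List.nodup_cons] at this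
        exact this.1)

theorem dirac (hH : IsChordalGraph H) (s : Finset V) :
    s.Nonempty → (∀ x ∈ s, ∀ y ∈ s, x ≠ y → H.Adj x y) ∨
      ∃ v ∈ s, ∃ w ∈ s, v ≠ w ∧ ¬H.Adj v w ∧ SimpIn H ↑s v ∧ SimpIn H ↑s w := by
  classical
  induction s using Finset.strongInduction with
  | _ s ih =>
  intro hs
  by_cases hclq : ∀ x ∈ s, ∀ y ∈ s, x ≠ y → H.Adj x y
  · exact Or.inl hclq
  right
  push_neg at hclq
  obtain ⟨a, has, b, hbs, hab, hnadj⟩ := hclq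
  -- separators
  set cand : Finset (Finset V) :=
    s.powerset.filter (fun T => a ∉ T ∧ b ∉ T ∧ ¬ ReachIn H (↑s \ ↑T) a b) with hcand
  have hTfull : (s.erase a).erase b ∈ cand := by
    rw [hcand, Finset.mem_filter, Finset.mem_powerset]
    refine ⟨(Finset.erase_subset _ _).trans (Finset.erase_subset _ _), ?_, ?_, ?_⟩
    · intro hh
      exact (Finset.mem_erase.mp (Finset.mem_erase.mp hh).2).1 rfl
    · intro hh
      exact (Finset.mem_erase.mp hh).1 rfl
    · rintro ⟨p, hp⟩
      -- the walk's support is contained in {a, b}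
      have hsub : ∀ z ∈ p.support, z = a ∨ z = b := by
        intro z hz
        have h1 := hp z hz
        have h2 := h1.2
        rw [Finset.mem_coe, Finset.mem_erase, Finset.mem_erase] at h2
        push_neg at h2
        rcases eq_or_ne z b with hzz | hzz
        · exact Or.inr hzz
        rcases eq_or_ne z a with hzz' | hzz'
        · exact Or.inl hzz'
        · exact absurd (h2 hzz hzz') (by simpa using h1.1)
      cases p with
      | nil => exact hab rfl
      | @cons _ m _ hadj q =>
        have hmq : m ∈ (Walk.cons hadj q).support := by
          rw [Walk.support_cons]
          exact List.mem_cons_of_mem _ q.start_mem_support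
        rcases hsub m hmq with hma | hmb
        · exact hadj.ne hma.symm
        · exact hnadj (hmb ▸ hadj)
  obtain ⟨T₀, hT₀, hT₀min⟩ := Finset.exists_min_image cand Finset.card ⟨_, hTfull⟩
  rw [hcand, Finset.mem_filter, Finset.mem_powerset] at hT₀
  obtain ⟨hT₀s, haT₀, hbT₀, hsep⟩ := hT₀
  -- the two sides
  set A : Finset V := s.filter (fun z => z ∉ T₀ ∧ ReachIn H (↑s \ ↑T₀) a z) with hA
  set B : Finset V := s.filter (fun z => z ∉ T₀ ∧ ReachIn H (↑s \ ↑T₀) b z) with hB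
  have hadiff : a ∈ (↑s \ ↑T₀ : Set V) := ⟨has, by simpa using haT₀⟩
  have hbdiff : b ∈ (↑s \ ↑T₀ : Set V) := ⟨hbs, by simpa using hbT₀⟩
  have haA : a ∈ A := by
    rw [hA, Finset.mem_filter]
    exact ⟨has, haT₀, ReachIn.refl hadiff⟩
  have hbB : b ∈ B := by
    rw [hB, Finset.mem_filter]
    exact ⟨hbs, hbT₀, ReachIn.refl hbdiff⟩
  have hclosA : ∀ z ∈ A, ∀ u, H.Adj z u → u ∈ (↑s \ ↑T₀ : Set V) → u ∈ A := by
    intro z hz u hadj hu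
    rw [hA, Finset.mem_filter] at hz ⊢
    exact ⟨hu.1, by simpa using hu.2, hz.2.2.adj hadj hu⟩
  have hclosB : ∀ z ∈ B, ∀ u, H.Adj z u → u ∈ (↑s \ ↑T₀ : Set V) → u ∈ B := by
    intro z hz u hadj hu
    rw [hB, Finset.mem_filter] at hz ⊢
    exact ⟨hu.1, by simpa using hu.2, hz.2.2.adj hadj hu⟩
  have hABdisj : ∀ z, z ∈ A → z ∈ B → False := by
    intro z hzA hzB
    rw [hA, Finset.mem_filter] at hzA
    rw [hB, Finset.mem_filter] at hzB
    exact hsep (hzA.2.2.trans hzB.2.2.symm)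
  have hAB_nonadj : ∀ u ∈ A, ∀ w ∈ B, ¬H.Adj u w := by
    intro u hu w hw hadj
    have hwdiff : w ∈ (↑s \ ↑T₀ : Set V) := by
      rw [hB, Finset.mem_filter] at hw
      exact ⟨hw.1, by simpa using hw.2.1⟩
    exact hABdisj w (hclosA u hu w hadj hwdiff) hw
  -- members of A (resp. B) lie in s \ T₀
  have hAdiff : ∀ z ∈ A, z ∈ (↑s \ ↑T₀ : Set V) := by
    intro z hz
    rw [hA, Finset.mem_filter] at hz
    exact ⟨hz.1, by simpa using hz.2.1⟩
  have hBdiff : ∀ z ∈ B, z ∈ (↑s \ ↑T₀ : Set V) := by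
    intro z hz
    rw [hB, Finset.mem_filter] at hz
    exact ⟨hz.1, by simpa using hz.2.1⟩
  -- every separator vertex has neighbors on both sides
  have hnbr : ∀ t ∈ T₀, (∃ x ∈ A, H.Adj x t) ∧ (∃ x ∈ B, H.Adj x t) := by
    intro t ht
    have hts : t ∈ s := hT₀s ht
    -- T₀.erase t is not a separator
    have hnot : ¬ (T₀.erase t ∈ cand) := by
      intro hmem
      have := hT₀min _ hmem
      have hlt : (T₀.erase t).card < T₀.card := Finset.card_erase_lt_of_mem ht
      omega
    rw [hcand, Finset.mem_filter, Finset.mem_powerset] at hnot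
    push_neg at hnot
    have hreach : ReachIn H (↑s \ ↑(T₀.erase t)) a b := hnot ((Finset.erase_subset _ _).trans hT₀s)
      (fun hh => haT₀ (Finset.mem_of_mem_erase hh))
      (fun hh => hbT₀ (Finset.mem_of_mem_erase hh))
    obtain ⟨p, hp⟩ := hreach
    have hsupp : ∀ z ∈ p.support, z = t ∨ z ∈ (↑s \ ↑T₀ : Set V) := by
      intro z hz
      have := hp z hz
      rw [Set.mem_diff] at this
      by_cases hzt : z = t
      · exact Or.inl hzt
      · refine Or.inr ⟨this.1, ?_⟩
        intro hzT
        exact this.2 (by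
          rw [Finset.coe_erase]
          exact ⟨hzT, hzt⟩)
    have htp : t ∈ p.support := by
      by_contra htp
      apply hsep
      refine ⟨p, fun z hz => ?_⟩
      rcases hsupp z hz with rfl | hh
      · exact absurd hz htp
      · exact hh
    constructor
    · exact exists_adj_of_walk hclosA p haA (fun hh => haT₀ (hh ▸ ht)) htp hsupp
    · have htp' : t ∈ p.reverse.support := by
        rwa [Walk.support_reverse, List.mem_reverse]
      exact exists_adj_of_walk hclosB p.reverse hbB (fun hh => hbT₀ (hh ▸ ht)) htp'
        (fun z hz => hsupp z (by rwa [Walk.support_reverse, List.mem_reverse] at hz))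
  -- T₀ is a clique
  have hTclq : ∀ t₁ ∈ T₀, ∀ t₂ ∈ T₀, t₁ ≠ t₂ → H.Adj t₁ t₂ := by
    intro t₁ ht₁ t₂ ht₂ htne
    by_contra htadj
    -- build a chordless path through A
    obtain ⟨⟨x1, hx1A, hx1⟩, ⟨y1, hy1B, hy1⟩⟩ := hnbr t₁ ht₁
    obtain ⟨⟨x2, hx2A, hx2⟩, ⟨y2, hy2B, hy2⟩⟩ := hnbr t₂ ht₂
    -- a walk from t₁ to t₂ with interior in A
    have hreachx : ReachIn H (↑s \ ↑T₀) x1 x2 := by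
      rw [hA, Finset.mem_filter] at hx1A hx2A
      exact hx1A.2.2.symm.trans hx2A.2.2
    -- need: every vertex of some connecting walk lies in A
    have hx1diff := hAdiff x1 hx1A
    have walkA : ∃ p : H.Walk t₁ t₂, ∀ z ∈ p.support, z ∈ (↑A : Set V) ∪ {t₁, t₂} := by
      rw [hA, Finset.mem_filter] at hx1A
      obtain ⟨q, hq⟩ := hx1A.2.2.symm.trans (by
        rw [hA, Finset.mem_filter] at hx2A
        exact hx2A.2.2)
      -- all vertices of q are in A
      have hqA : ∀ z ∈ q.support, z ∈ A := by
        intro z hz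
        have hreach : ReachIn H (↑s \ ↑T₀) a z := reachin_all q hq hx1A.2.2 z hz
        have hzs := hq z hz
        rw [hA, Finset.mem_filter]
        exact ⟨hzs.1, by simpa using hzs.2, hreach⟩
      refine ⟨Walk.cons hx1.symm (q.append (Walk.cons hx2 Walk.nil)), ?_⟩
      intro z hz
      rw [Walk.support_cons, List.mem_cons] at hz
      rcases hz with rfl | hz
      · exact Or.inr (by simp)
      rw [Walk.mem_support_append_iff] at hz
      rcases hz with hz | hz
      · exact Or.inl (hqA z hz)
      · simp at hz
        rcases hz with rfl | rfl
        · exact Or.inl (hqA _ q.end_mem_support)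
        · exact Or.inr (by simp)
    obtain ⟨pA0, hpA0⟩ := walkA
    obtain ⟨RA, hRAp, hRAs, -, hRAc⟩ := exists_minpath ((↑A : Set V) ∪ {t₁, t₂}) ∅
      pA0 hpA0 (by simp)
    -- similarly through B
    have walkB : ∃ p : H.Walk t₂ t₁, ∀ z ∈ p.support, z ∈ (↑B : Set V) ∪ {t₁, t₂} := by
      rw [hB, Finset.mem_filter] at hy1B hy2B
      obtain ⟨q, hq⟩ := hy2B.2.2.symm.trans hy1B.2.2
      have hqB : ∀ z ∈ q.support, z ∈ B := by
        intro z hz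
        have hreach : ReachIn H (↑s \ ↑T₀) b z := reachin_all q hq hy2B.2.2 z hz
        have hzs := hq z hz
        rw [hB, Finset.mem_filter]
        exact ⟨hzs.1, by simpa using hzs.2, hreach⟩
      refine ⟨Walk.cons hy2.symm (q.append (Walk.cons hy1 Walk.nil)), ?_⟩
      intro z hz
      rw [Walk.support_cons, List.mem_cons] at hz
      rcases hz with rfl | hz
      · exact Or.inr (by simp)
      rw [Walk.mem_support_append_iff] at hz
      rcases hz with hz | hz
      · exact Or.inl (hqB z hz)
      · simp at hz
        rcases hz with rfl | rfl
        · exact Or.inl (hqB _ q.end_mem_support)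
        · exact Or.inr (by simp)
    obtain ⟨pB0, hpB0⟩ := walkB
    obtain ⟨RB, hRBp, hRBs, -, hRBc⟩ := exists_minpath ((↑B : Set V) ∪ {t₁, t₂}) ∅
      pB0 hpB0 (by simp)
    -- t₁, t₂ not in A or B
    have htA : ∀ t' ∈ T₀, t' ∉ A := by
      intro t' ht' hmem
      rw [hA, Finset.mem_filter] at hmem
      exact hmem.2.1 ht'
    have htB : ∀ t' ∈ T₀, t' ∉ B := by
      intro t' ht' hmem
      rw [hB, Finset.mem_filter] at hmem
      exact hmem.2.1 ht'
    -- supports of RA, RB only meet in t₁, t₂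
    have hABsup : ∀ z, z ∈ RA.support → z ∈ RB.support → z = t₁ ∨ z = t₂ := by
      intro z hz1 hz2
      rcases hRAs z hz1 with hz1' | hz1'
      · rcases hRBs z hz2 with hz2' | hz2'
        · exact absurd hz2' (fun hh => hABdisj z hz1' hh)
        · simpa using hz2'
      · simpa using hz1'
    -- lengths are at least 2
    have hlenA : 2 ≤ RA.length := by
      rcases Nat.lt_or_ge RA.length 2 with hl | hl
      · interval_cases hh : RA.length
        · exact absurd (Walk.eq_of_length_eq_zero hh) htne
        · exact absurd (Walk.adj_of_mem_edges RA (by rw [edges_length_one RA hh]; simp))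
            htadj
      · exact hl
    have hlenB : 2 ≤ RB.length := by
      rcases Nat.lt_or_ge RB.length 2 with hl | hl
      · interval_cases hh : RB.length
        · exact absurd (Walk.eq_of_length_eq_zero hh) htne.symm
        · exact absurd (Walk.adj_of_mem_edges RB (by rw [edges_length_one RB hh]; simp))
            (fun hh2 => htadj hh2.symm)
      · exact hl
    -- edge sets are disjoint
    have hedisj : ∀ e, e ∈ RA.edges → e ∈ RB.edges → False := by
      intro e he1 he2
      induction e with
      | h u w =>
        have hadj := Walk.adj_of_mem_edges RA he1
        have hu1 : u ∈ RA.support := RA.fst_mem_support_of_mem_edges he1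
        have hw1 : w ∈ RA.support := RA.snd_mem_support_of_mem_edges he1
        have hu2 : u ∈ RB.support := RB.fst_mem_support_of_mem_edges he2
        have hw2 : w ∈ RB.support := RB.snd_mem_support_of_mem_edges he2
        rcases hABsup u hu1 hu2 with rfl | rfl <;>
          rcases hABsup w hw1 hw2 with rfl | rfl
        · exact hadj.ne rfl
        · exact htadj hadj
        · exact htadj hadj.symm
        · exact hadj.ne rfl
    -- the glued cycle
    set Z := RA.append RB with hZ
    have hZcyc : Z.IsCycle := cycle_of_two_paths RA RB hRAp hRBp htne hABsup hedisj
    -- Z is a hole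
    have hZhole : IsHole H Z := by
      refine ⟨hZcyc, ?_, ?_⟩
      · rw [hZ, Walk.length_append]; omega
      · intro u w hu hw hadj
        have hmemZ : ∀ z, z ∈ Z.support → z ∈ RA.support ∨ z ∈ RB.support := by
          intro z hz
          rw [hZ, Walk.mem_support_append_iff] at hz
          exact hz
        have hend1A : t₁ ∈ RA.support := RA.start_mem_support
        have hend2A : t₂ ∈ RA.support := RA.end_mem_support
        have hend1B : t₁ ∈ RB.support := RB.end_mem_support
        have hend2B : t₂ ∈ RB.support := RB.start_mem_support
        have hedge : s(u, w) ∈ RA.edges ∨ s(u, w) ∈ RB.edges := by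
          by_cases huA : u ∈ RA.support <;> by_cases hwA : w ∈ RA.support
          · exact Or.inl (hRAc u w huA hwA hadj (by simp))
          · have hwB : w ∈ RB.support := (hmemZ w hw).resolve_left hwA
            by_cases huB : u ∈ RB.support
            · exact Or.inr (hRBc u w huB hwB hadj (by simp))
            · -- u strictly in A, w strictly in B
              have huA' : u ∈ A := by
                rcases hRAs u huA with hh | hh
                · exact hh
                · simp only [Set.mem_insert_iff, Set.mem_singleton_iff] at hh
                  rcases hh with rfl | rfl
                  · exact absurd hend1B huB
                  · exact absurd hend2B huB
              have hwB' : w ∈ B := by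
                rcases hRBs w hwB with hh | hh
                · exact hh
                · simp only [Set.mem_insert_iff, Set.mem_singleton_iff] at hh
                  rcases hh with rfl | rfl
                  · exact absurd hend1A hwA
                  · exact absurd hend2A hwA
              exact absurd hadj (hAB_nonadj u huA' w hwB')
          · have huB : u ∈ RB.support := (hmemZ u hu).resolve_left huA
            by_cases hwB : w ∈ RB.support
            · exact Or.inr (hRBc u w huB hwB hadj (by simp))
            · have hwA2 : w ∈ RA.support := (hmemZ w hw).resolve_right hwB
              have hwA' : w ∈ A := by
                rcases hRAs w hwA2 with hh | hh
                · exact hh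
                · simp only [Set.mem_insert_iff, Set.mem_singleton_iff] at hh
                  rcases hh with rfl | rfl
                  · exact absurd hend1B hwB
                  · exact absurd hend2B hwB
              have huB' : u ∈ B := by
                rcases hRBs u huB with hh | hh
                · exact hh
                · simp only [Set.mem_insert_iff, Set.mem_singleton_iff] at hh
                  rcases hh with rfl | rfl
                  · exact absurd hend1A huA
                  · exact absurd hend2A huA
              exact absurd hadj.symm (hAB_nonadj w hwA' u huB')
          · exact Or.inr (hRBc u w ((hmemZ u hu).resolve_left huA)
              ((hmemZ w hw).resolve_left hwA) hadj (by simp))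
        rw [hZ, Walk.edges_append, List.mem_append]
        exact hedge
    exact hH t₁ Z hZhole
  -- apply the induction hypothesis on both sides
  have hside : ∀ (c : V) (C : Finset V), c ∈ C →
      (∀ z ∈ C, ∀ u, H.Adj z u → u ∈ (↑s \ ↑T₀ : Set V) → u ∈ C) →
      (∀ z ∈ C, z ∈ (↑s \ ↑T₀ : Set V)) →
      (C ∪ T₀ ⊂ s) →
      ∃ v ∈ C, SimpIn H ↑s v := by
    intro c C hcC hclosC hCdiff hssub
    have hCs : ∀ z ∈ C, z ∈ s := fun z hz => (hCdiff z hz).1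
    have hCT : ∀ z ∈ C, z ∉ T₀ := fun z hz => by
      have := (hCdiff z hz).2
      simpa using this
    -- simplicial within C ∪ T₀ lifts to s
    have hlift : ∀ v ∈ C, SimpIn H ↑(C ∪ T₀) v → SimpIn H ↑s v := by
      intro v hv hsimp x hx y hy hvx hvy
      have hmem : ∀ u, u ∈ (↑s : Set V) → H.Adj v u → u ∈ (↑(C ∪ T₀) : Set V) := by
        intro u hu hadj
        rw [Finset.coe_union, Set.mem_union]
        by_cases huT : u ∈ T₀
        · exact Or.inr huT
        · exact Or.inl (hclosC v hv u hadj ⟨hu, by simpa using huT⟩)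
      exact hsimp x (hmem x hx hvx) y (hmem y hy hvy) hvx hvy
    rcases ih (C ∪ T₀) hssub ⟨c, Finset.mem_union_left _ hcC⟩ with hclq2 | htwo
    · refine ⟨c, hcC, hlift c hcC ?_⟩
      intro x hx y hy hvx hvy
      by_cases hxy : x = y
      · exact Or.inl hxy
      · exact Or.inr (hclq2 x (by simpa using hx) y (by simpa using hy) hxy)
    · obtain ⟨v, hv, w, hw, hvw, hnvw, hsv, hsw⟩ := htwo
      rw [Finset.mem_union] at hv hw
      rcases hv with hv | hv
      · exact ⟨v, hv, hlift v hv hsv⟩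
      · rcases hw with hw | hw
        · exact ⟨w, hw, hlift w hw hsw⟩
        · exact absurd (hTclq v hv w hw hvw) hnvw
  -- the two sides give the two simplicial vertices
  have hsubA : A ∪ T₀ ⊂ s := by
    rw [Finset.ssubset_iff_of_subset]
    · refine ⟨b, hbs, ?_⟩
      rw [Finset.mem_union]
      rintro (hh | hh)
      · rw [hA, Finset.mem_filter] at hh
        exact hsep hh.2.2
      · exact hbT₀ hh
    · apply Finset.union_subset _ hT₀s
      intro z hz
      exact (hAdiff z hz).1
  have hsubB : B ∪ T₀ ⊂ s := by
    rw [Finset.ssubset_iff_of_subset]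
    · refine ⟨a, has, ?_⟩
      rw [Finset.mem_union]
      rintro (hh | hh)
      · rw [hB, Finset.mem_filter] at hh
        exact hsep hh.2.2.symm
      · exact haT₀ hh
    · apply Finset.union_subset _ hT₀s
      intro z hz
      exact (hBdiff z hz).1
  obtain ⟨v, hvA, hvs⟩ := hside a A haA hclosA hAdiff hsubA
  obtain ⟨w, hwB, hws⟩ := hside b B hbB hclosB hBdiff hsubB
  refine ⟨v, (hAdiff v hvA).1, w, (hBdiff w hwB).1, ?_, hAB_nonadj v hvA w hwB, hvs, hws⟩
  intro hvw
  exact hABdisj v hvA (hvw ▸ hwB)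

theorem dirac_simp (hH : IsChordalGraph H) (s : Finset V) (hs : s.Nonempty) :
    ∃ v ∈ s, SimpIn H ↑s v := by
  rcases dirac hH s hs with hclq | ⟨v, hv, _, _, _, _, hsv, _⟩
  · obtain ⟨c, hc⟩ := hs
    refine ⟨c, hc, ?_⟩
    intro x hx y hy hvx hvy
    by_cases hxy : x = y
    · exact Or.inl hxy
    · exact Or.inr (hclq x hx y hy hxy)
  · exact ⟨v, hv, hsv⟩



variable {V : Type*}



/-- `H` with all edges at `v` removed. -/
def era (H : SimpleGraph V) (v : V) : SimpleGraph V where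
  Adj x y := H.Adj x y ∧ x ≠ v ∧ y ≠ v
  symm := ⟨by rintro x y ⟨h, hx, hy⟩; exact ⟨h.symm, hy, hx⟩⟩
  loopless := ⟨by rintro x ⟨h, _, _⟩; exact H.loopless.irrefl x h⟩

lemma era_le {H : SimpleGraph V} {v : V} : era H v ≤ H := by intro a b hab; exact hab.1

lemma era_eq_of_isolated {H : SimpleGraph V} {v : V} (hiso : ∀ x, ¬H.Adj v x) :
    era H v = H := by
  ext x y
  constructor
  · exact fun h => h.1
  · intro h
    refine ⟨h, ?_, ?_⟩
    · rintro rfl; exact hiso y h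
    · rintro rfl; exact hiso x h.symm

theorem chordal_era {H : SimpleGraph V} (hH : IsChordalGraph H) (v : V) :
    IsChordalGraph (era H v) := by
  classical
  intro u w hw
  obtain ⟨hcyc, hlen, hch⟩ := hw
  have hvs : v ∉ w.support := by
    intro hv
    cases hc : w.rotate _ hv with
    | nil =>
      have hperm := (w.rotate_edges _ hv).perm.length_eq
      rw [hc] at hperm
      simp only [Walk.edges_nil, List.length_nil] at hperm
      rw [Walk.length_edges] at hperm
      omega
    | cons hadj q => exact hadj.2.1 rfl
  have hGe : ∀ e ∈ w.edges, e ∈ H.edgeSet := fun e he =>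
    (edgeSet_mono era_le) (w.edges_subset_edgeSet he)
  have hhole : IsHole H (w.transfer H hGe) := by
    refine ⟨hcyc.transfer hGe, by rw [Walk.length_transfer]; exact hlen, ?_⟩
    intro x y hx hy hadj
    rw [Walk.support_transfer] at hx hy
    rw [Walk.edges_transfer]
    refine hch x y hx hy ⟨hadj, ?_, ?_⟩
    · rintro rfl; exact hvs hx
    · rintro rfl; exact hvs hy
  exact hH u _ hhole

/-- An elimination ordering for `H`. -/
def IsElim (H : SimpleGraph V) : List V → Prop
  | [] => ∀ x y, ¬H.Adj x y
  | v :: l => (∀ x y, H.Adj v x → H.Adj v y → x = y ∨ H.Adj x y) ∧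
      (∀ x, H.Adj v x → x ∈ l) ∧ IsElim (era H v) l

lemma isElim_of_no_edges {H : SimpleGraph V} (hE : ∀ x y, ¬H.Adj x y) :
    ∀ l : List V, IsElim H l := by
  intro l
  induction l generalizing H with
  | nil => exact hE
  | cons v t ih =>
    refine ⟨fun x y hx => absurd hx (hE v x), fun x hx => absurd hx (hE v x), ?_⟩
    exact ih (fun x y hxy => hE x y hxy.1)

lemma isElim_erase [DecidableEq V] {H : SimpleGraph V} {u : V} :
    ∀ l : List V, IsElim H l → (∀ x, ¬H.Adj u x) → IsElim H (l.erase u) := by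
  intro l
  induction l generalizing H with
  | nil => intro he _; exact he
  | cons w t ih =>
    intro he hiso
    by_cases huw : w = u
    · subst huw
      rw [List.erase_cons_head]
      have := he.2.2
      rwa [era_eq_of_isolated hiso] at this
    · rw [List.erase_cons_tail (by simp [Ne.symm, huw])]
      refine ⟨he.1, ?_, ?_⟩
      · intro x hx
        have hxu : x ≠ u := by
          rintro rfl
          exact hiso w hx.symm
        exact List.mem_erase_of_ne hxu |>.mpr (he.2.1 x hx)
      · exact ih he.2.2 (fun x hx => hiso x hx.1)

theorem elim_exists [Fintype V] (n : ℕ) :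
    ∀ H : SimpleGraph V, H.edgeSet.ncard ≤ n → IsChordalGraph H →
      ∃ l : List V, l.Nodup ∧ (∀ x : V, x ∈ l) ∧ IsElim H l := by
  classical
  induction n with
  | zero =>
    intro H hcard hH
    have hE : ∀ x y, ¬H.Adj x y := by
      intro x y hxy
      have : H.edgeSet = ∅ := by
        rw [← Set.ncard_eq_zero (Set.toFinite _)]
        omega
      have : s(x, y) ∈ H.edgeSet := hxy
      simp_all
    exact ⟨Finset.univ.toList, Finset.nodup_toList _,
      fun x => Finset.mem_toList.mpr (Finset.mem_univ x), isElim_of_no_edges hE _⟩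
  | succ n ih =>
    intro H hcard hH
    by_cases hE : ∀ x y, ¬H.Adj x y
    · exact ⟨Finset.univ.toList, Finset.nodup_toList _,
        fun x => Finset.mem_toList.mpr (Finset.mem_univ x), isElim_of_no_edges hE _⟩
    push_neg at hE
    obtain ⟨x0, y0, hx0⟩ := hE
    set s : Finset V := Finset.univ.filter (fun v => ∃ u, H.Adj v u) with hs
    have hsx0 : x0 ∈ s := by
      rw [hs, Finset.mem_filter]
      exact ⟨Finset.mem_univ _, y0, hx0⟩
    obtain ⟨v, hvs, hvsimp⟩ := dirac_simp hH s ⟨x0, hsx0⟩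
    have hsimp : ∀ x y, H.Adj v x → H.Adj v y → x = y ∨ H.Adj x y := by
      intro x y hx hy
      have hxs : x ∈ s := by
        rw [hs, Finset.mem_filter]
        exact ⟨Finset.mem_univ _, v, hx.symm⟩
      have hys : y ∈ s := by
        rw [hs, Finset.mem_filter]
        exact ⟨Finset.mem_univ _, v, hy.symm⟩
      exact hvsimp x hxs y hys hx hy
    obtain ⟨u0, hu0⟩ : ∃ u, H.Adj v u := by
      rw [hs, Finset.mem_filter] at hvs
      exact hvs.2
    -- remove v's edges
    have hss : (era H v).edgeSet ⊂ H.edgeSet := by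
      constructor
      · exact edgeSet_mono era_le
      · intro hsub
        have : s(v, u0) ∈ (era H v).edgeSet := hsub hu0
        rw [mem_edgeSet] at this
        exact this.2.1 rfl
    have hcard' : (era H v).edgeSet.ncard ≤ n := by
      have := Set.ncard_lt_ncard hss (Set.toFinite _)
      omega
    obtain ⟨l', hnd, hall, helim⟩ := ih (era H v) hcard' (chordal_era hH v)
    refine ⟨v :: l'.erase v, ?_, ?_, ?_⟩
    · rw [List.nodup_cons]
      exact ⟨fun hvv => ((hnd.mem_erase_iff).mp hvv).1 rfl, hnd.erase v⟩
    · intro x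
      by_cases hxv : x = v
      · subst hxv; exact List.mem_cons_self
      · exact List.mem_cons_of_mem _ ((hnd.mem_erase_iff).mpr ⟨hxv, hall x⟩)
    · refine ⟨hsimp, ?_, ?_⟩
      · intro x hx
        have hxv : x ≠ v := fun hh => H.loopless.irrefl v (hh ▸ hx)
        exact (hnd.mem_erase_iff).mpr ⟨hxv, hall x⟩
      · refine isElim_erase l' helim ?_
        intro x hx
        exact hx.2.1 rfl

theorem build [Fintype V] (H : SimpleGraph V) (l : List V) (he : IsElim H l) :
    ∃ Q : Fin l.length → Finset V,
      (∀ i, ∀ x ∈ Q i, ∀ y ∈ Q i, x ≠ y → H.Adj x y) ∧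
      (∀ x y, H.Adj x y → ∃ i, x ∈ Q i ∧ y ∈ Q i) ∧
      (∀ i, ∀ x ∈ Q i, x ∈ l.drop (i : ℕ)) := by
  classical
  induction l generalizing H with
  | nil => exact ⟨Fin.elim0, fun i => i.elim0, fun x y hxy => absurd hxy (he x y),
      fun i => i.elim0⟩
  | cons v t ih =>
    obtain ⟨hsimp, hmem, he'⟩ := he
    obtain ⟨Q', hclq', hcov', hdrop'⟩ := ih (era H v) he'
    set N : Finset V := Finset.univ.filter (fun x => H.Adj v x) with hN
    refine ⟨Fin.cases (insert v N) (fun j => Q' j), ?_, ?_, ?_⟩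
    · intro i
      induction i using Fin.cases with
      | zero =>
        intro x hx y hy hxy
        simp only [Fin.cases_zero] at hx hy
        rw [Finset.mem_insert, hN, Finset.mem_filter] at hx hy
        rcases hx with rfl | hx
        · rcases hy with rfl | hy
          · exact absurd rfl hxy
          · exact hy.2
        · rcases hy with rfl | hy
          · exact hx.2.symm
          · rcases hsimp x y hx.2 hy.2 with hh | hh
            · exact absurd hh hxy
            · exact hh
      | succ j =>
        intro x hx y hy hxy
        simp only [Fin.cases_succ] at hx hy
        exact (hclq' j x hx y hy hxy).1
    · intro x y hxy
      by_cases hxv : x = v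
      · subst hxv
        refine ⟨(0 : Fin (t.length + 1)), ?_, ?_⟩
        · simp only [Fin.cases_zero]; exact Finset.mem_insert_self _ _
        · simp only [Fin.cases_zero, Finset.mem_insert, hN, Finset.mem_filter]
          exact Or.inr ⟨Finset.mem_univ _, hxy⟩
      by_cases hyv : y = v
      · subst hyv
        refine ⟨(0 : Fin (t.length + 1)), ?_, ?_⟩
        · simp only [Fin.cases_zero, Finset.mem_insert, hN, Finset.mem_filter]
          exact Or.inr ⟨Finset.mem_univ _, hxy.symm⟩
        · simp only [Fin.cases_zero]; exact Finset.mem_insert_self _ _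
      · obtain ⟨j, hj1, hj2⟩ := hcov' x y ⟨hxy, hxv, hyv⟩
        exact ⟨j.succ, by simp only [Fin.cases_succ]; exact hj1,
          by simp only [Fin.cases_succ]; exact hj2⟩
    · intro i
      induction i using Fin.cases with
      | zero =>
        intro x hx
        simp only [Fin.cases_zero, Finset.mem_insert, hN, Finset.mem_filter] at hx
        simp only [Fin.val_zero, List.drop_zero]
        rcases hx with rfl | hx
        · exact List.mem_cons_self
        · exact List.mem_cons_of_mem _ (hmem x hx.2)
      | succ j =>
        intro x hx
        simp only [Fin.cases_succ] at hx
        exact hdrop' j x hx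


end Stmt16

/-- Let `G` be a connected graph such that for every hole `C` of
`G` there exists an edge `e_C ∈ E(C)` belonging to no other induced cycle of
`G`. Then `k(G) ≤ dim H(G) + 1`. -/
theorem stmt16 {V : Type*} [Fintype V] (G : SimpleGraph V) (hconn : G.Connected)
    (h : ∀ E ∈ holeEdgeSets G, ∃ e ∈ E,
      ∀ E' ∈ inducedCycleEdgeSets G, E' ≠ E → e ∉ E') :
    competitionNumber G ≤ holeDim G + 1 := by
  classical
  have hcopy := h
  choose ec hec hpriv using h
  set F : Set (Sym2 V) := {e | ∃ E, ∃ hE : E ∈ holeEdgeSets G, e = ec E hE} with hF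
  have hFpriv : ∀ f ∈ F, ∃ E ∈ holeEdgeSets G, f ∈ E ∧
      ∀ E' ∈ inducedCycleEdgeSets G, E' ≠ E → f ∉ E' := by
    rintro f ⟨E, hE, rfl⟩
    exact ⟨E, hE, hec E hE, hpriv E hE⟩
  have hFcov : ∀ E ∈ holeEdgeSets G, ∃ f ∈ F, f ∈ E := by
    intro E hE
    exact ⟨ec E hE, ⟨E, hE, rfl⟩, hec E hE⟩
  have hchord : IsChordalGraph (G.deleteEdges F) :=
    Stmt16.chordal_deleteEdges hFpriv hFcov
  obtain ⟨l, hnd, hall, helim⟩ := Stmt16.elim_exists (G.deleteEdges F).edgeSet.ncard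
    (G.deleteEdges F) le_rfl hchord
  obtain ⟨Q', hclq', hcov', hdrop'⟩ := Stmt16.build (G.deleteEdges F) l helim
  haveI : Fintype (holeEdgeSets G) := (Set.toFinite _).fintype
  have hm : Fintype.card (holeEdgeSets G) = numHoles G := by
    rw [numHoles, ← Nat.card_coe_set_eq, Nat.card_eq_fintype_card]
  set en := Fintype.equivFin ↥(holeEdgeSets G) with hen
  have hend : ∀ E : holeEdgeSets G, ∃ a b : V, ec E.1 E.2 = s(a, b) ∧ G.Adj a b := by
    intro E
    have hedge : ec E.1 E.2 ∈ G.edgeSet := Stmt16.hole_edges_sub_edgeSet E.2 (hec E.1 E.2)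
    revert hedge
    generalize ec E.1 E.2 = e
    induction e with
    | h a b => exact fun hab => ⟨a, b, rfl, hab⟩
  choose ea eb hEab hGadj using hend
  have hle : ∀ {x y : V}, (G.deleteEdges F).Adj x y → G.Adj x y :=
    fun hh => (SimpleGraph.deleteEdges_adj.mp hh).1
  -- the scheme
  have hidx : ∀ (i : Fin l.length) (x : V), x ∈ l.drop (i : ℕ) → (i : ℕ) ≤ l.idxOf x := by
    intro i x hx
    have hsplit : l = l.take (i : ℕ) ++ l.drop (i : ℕ) := (List.take_append_drop _ _).symm
    have hnotin : x ∉ l.take (i : ℕ) := by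
      intro hmem
      have hnd2 := hnd
      rw [hsplit, List.nodup_append] at hnd2
      exact hnd2.2.2 x hmem x hx rfl
    have : l.idxOf x = (l.take (i : ℕ)).length + (l.drop (i : ℕ)).idxOf x := by
      conv_lhs => rw [hsplit]
      exact List.idxOf_append_of_notMem hnotin
    rw [this, List.length_take]
    have := i.isLt
    omega
  set k := numHoles G + 1 with hk
  set preyL : Fin l.length → V ⊕ Fin k := fun i =>
    if h0 : (i : ℕ) = 0 then Sum.inr ⟨0, by omega⟩
    else Sum.inl (l.get ⟨(i : ℕ) - 1, by have := i.isLt; omega⟩) with hpreyL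
  set preyR : ↥(holeEdgeSets G) → V ⊕ Fin k := fun E =>
    Sum.inr ⟨(en E : ℕ) + 1, by have := (en E).isLt; omega⟩ with hpreyR
  have S : Stmt16.CNScheme G k := {
    I := Fin l.length ⊕ ↥(holeEdgeSets G)
    Q := Sum.elim Q' (fun E => {ea E, eb E})
    clique := by
      rintro (i | E) x hx y hy hxy
      · exact hle (hclq' i x hx y hy hxy)
      · simp only [Sum.elim_inr, Finset.mem_insert, Finset.mem_singleton] at hx hy
        rcases hx with rfl | rfl <;> rcases hy with rfl | rfl
        · exact absurd rfl hxy
        · exact hGadj E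
        · exact (hGadj E).symm
        · exact absurd rfl hxy
    cover := by
      intro x y hxy
      by_cases hmem : s(x, y) ∈ F
      · rw [hF] at hmem
        obtain ⟨E, hE, hEeq⟩ := hmem
        refine ⟨Sum.inr ⟨E, hE⟩, ?_⟩
        have heq2 : s(ea ⟨E, hE⟩, eb ⟨E, hE⟩) = s(x, y) := by
          rw [← hEab ⟨E, hE⟩]
          exact hEeq.symm
        rw [Sym2.eq_iff] at heq2
        simp only [Sum.elim_inr, Finset.mem_insert, Finset.mem_singleton]
        rcases heq2 with ⟨hh1, hh2⟩ | ⟨hh1, hh2⟩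
        · exact ⟨Or.inl hh1.symm, Or.inr hh2.symm⟩
        · exact ⟨Or.inr hh2.symm, Or.inl hh1.symm⟩
      · have hadj' : (G.deleteEdges F).Adj x y := SimpleGraph.deleteEdges_adj.mpr ⟨hxy, hmem⟩
        obtain ⟨i, h1, h2⟩ := hcov' x y hadj'
        exact ⟨Sum.inl i, h1, h2⟩
    prey := Sum.elim preyL preyR
    inj := by
      rintro (i | E) (j | E') heq <;>
        simp only [Sum.elim_inl, Sum.elim_inr, hpreyL, hpreyR] at heq
      · by_cases hi0 : (i : ℕ) = 0 <;> by_cases hj0 : (j : ℕ) = 0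
        · exact congrArg Sum.inl (Fin.ext (by omega))
        · rw [dif_pos hi0, dif_neg hj0] at heq
          simp at heq
        · rw [dif_neg hi0, dif_pos hj0] at heq
          simp at heq
        · rw [dif_neg hi0, dif_neg hj0] at heq
          have hget := Sum.inl.inj heq
          have := (List.Nodup.get_inj_iff hnd).mp hget
          have := congrArg Fin.val this
          simp only at this
          exact congrArg Sum.inl (Fin.ext (by omega))
      · by_cases hi0 : (i : ℕ) = 0
        · rw [dif_pos hi0] at heq
          have := Sum.inr.inj heq
          have := congrArg Fin.val this
          simp at this
        · rw [dif_neg hi0] at heq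
          simp at heq
      · by_cases hj0 : (j : ℕ) = 0
        · rw [dif_pos hj0] at heq
          have := Sum.inr.inj heq
          have := congrArg Fin.val this
          simp at this
        · rw [dif_neg hj0] at heq
          simp at heq
      · have h1 := Sum.inr.inj heq
        have h2 := congrArg Fin.val h1
        simp only at h2
        have h3 : en E = en E' := Fin.ext (by omega)
        exact congrArg Sum.inr (en.injective h3)
    hf := Sum.elim (fun v => l.idxOf v + 1) (fun _ => 0)
    dec := by
      rintro (i | E) x hx
      · simp only [Sum.elim_inl] at hx ⊢
        have hxd : x ∈ l.drop (i : ℕ) := hdrop' i x hx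
        have hxi := hidx i x hxd
        simp only [hpreyL]
        by_cases hi0 : (i : ℕ) = 0
        · rw [dif_pos hi0]
          simp only [Sum.elim_inr, Sum.elim_inl]
          omega
        · rw [dif_neg hi0]
          simp only [Sum.elim_inl]
          have hgi : l.idxOf (l.get ⟨(i : ℕ) - 1, by have := i.isLt; omega⟩)
              = (i : ℕ) - 1 := by
            rw [List.get_eq_getElem]
            exact List.Nodup.idxOf_getElem hnd _ _
          rw [hgi]
          omega
      · simp only [Sum.elim_inr, hpreyR, Sum.elim_inl]
        omega
  }
  have h1 : competitionNumber G ≤ k := S.le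
  have h2 : numHoles G ≤ holeDim G := Stmt16.numHoles_le_holeDim G hcopy
  omega
end

section
/- Let G be a connected graph with a connected spanning subgraph G' that contains all the triangles of G, such that G' is chordal, and let e ∈ E(G) \ E(G'). Then a shortest cycle of G' + e containing the edge e is a hole of G' + e, and its characteristic vector lies in the hole space H(G) of G. -/
open SimpleGraph

section Aux

open SimpleGraph Walk

variable {V : Type*}

lemma aux_end_mem_tail_support {G : SimpleGraph V} {u v : V} (p : G.Walk u v) (h : ¬ p.Nil) :
    v ∈ p.support.tail := by
  cases p with
  | nil => simp at h
  | cons h' q => simpa using q.end_mem_support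

lemma aux_mem_support_iff_mem_tail {G : SimpleGraph V} {v u : V} (c : G.Walk v v)
    (h : ¬ c.Nil) : u ∈ c.support ↔ u ∈ c.support.tail := by
  constructor
  · intro hu
    rw [support_eq_cons, List.mem_cons] at hu
    rcases hu with hu | hu
    · exact hu ▸ aux_end_mem_tail_support c h
    · exact hu
  · intro hu
    rw [support_eq_cons]
    exact List.mem_cons_of_mem _ hu

lemma aux_length_rotate [DecidableEq V] {G : SimpleGraph V} {u v : V} (c : G.Walk v v)
    (h : u ∈ c.support) : (c.rotate u h).length = c.length := by
  rw [rotate, length_append, Nat.add_comm, ← length_append, take_spec]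

lemma aux_mem_support_rotate [DecidableEq V] {G : SimpleGraph V} {u v x : V} (c : G.Walk v v)
    (h : u ∈ c.support) (hc : ¬ c.Nil) : x ∈ (c.rotate u h).support ↔ x ∈ c.support := by
  have hc' : ¬ (c.rotate u h).Nil := by
    rw [nil_iff_length_eq, aux_length_rotate]
    rw [nil_iff_length_eq] at hc
    exact hc
  rw [aux_mem_support_iff_mem_tail _ hc', aux_mem_support_iff_mem_tail _ hc]
  exact (support_rotate c u h).mem_iff

lemma aux_edge_of_length_one {G : SimpleGraph V} {u v : V} (p : G.Walk u v)
    (h : p.length = 1) : s(u, v) ∈ p.edges := by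
  cases p with
  | nil => simp at h
  | cons ha r =>
    have h0 : r.length = 0 := by simpa using h
    have := r.eq_of_length_eq_zero h0
    subst this
    simp

lemma aux_mid_of_length_two {G : SimpleGraph V} {u v : V} (p : G.Walk u v)
    (h : p.length = 2) : ∃ z, G.Adj u z ∧ G.Adj z v := by
  cases p with
  | nil => simp at h
  | cons ha r =>
    cases r with
    | nil => simp at h
    | cons hb r' =>
      have h0 : r'.length = 0 := by simpa using h
      have := r'.eq_of_length_eq_zero h0
      subst this
      exact ⟨_, ha, hb⟩

/-- Splitting a cycle at a chord into two smaller cycles. -/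
lemma aux_split_cycle [DecidableEq V] {K : SimpleGraph V} {v x y : V} (C : K.Walk v v)
    (hC : C.IsCycle) (hx : x ∈ C.support) (hy : y ∈ C.support)
    (hxy : K.Adj x y) (hchord : s(x, y) ∉ C.edges) :
    ∃ (p : K.Walk x y) (q : K.Walk y x),
      (Walk.cons hxy.symm p).IsCycle ∧ (Walk.cons hxy q).IsCycle ∧
      p.length + q.length = C.length ∧ 2 ≤ p.length ∧ 2 ≤ q.length ∧
      (∀ e : Sym2 V, e ∈ C.edges ↔ (e ∈ p.edges ∨ e ∈ q.edges)) ∧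
      (∀ e : Sym2 V, e ∈ p.edges → e ∉ q.edges) ∧
      (∀ u : V, u ∈ p.support → u ∈ C.support) ∧
      (∀ u : V, u ∈ q.support → u ∈ C.support) ∧
      (∀ u : V, u ∈ p.support → u ∈ q.support → u = x ∨ u = y) := by
  have hCnil : ¬ C.Nil := by
    rw [nil_iff_length_eq]
    have := hC.three_le_length
    omega
  have hC' : (C.rotate x hx).IsCycle := hC.rotate hx
  set C' := C.rotate x hx with hC'def
  have hmemsup : ∀ u : V, u ∈ C'.support ↔ u ∈ C.support := fun u =>
    aux_mem_support_rotate C hx hCnil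
  have hy' : y ∈ C'.support := (hmemsup y).2 hy
  set p := C'.takeUntil y hy' with hpdef
  set q := C'.dropUntil y hy' with hqdef
  have hspec : p.append q = C' := take_spec C' hy'
  have hedgesC' : ∀ e : Sym2 V, e ∈ C'.edges ↔ e ∈ C.edges := fun e =>
    (rotate_edges C x hx).mem_iff
  have hedgesplit : C'.edges = p.edges ++ q.edges := by
    rw [← hspec, edges_append]
  have hchord' : s(x, y) ∉ C'.edges := fun h => hchord ((hedgesC' _).1 h)
  have hednodup : (p.edges ++ q.edges).Nodup := by
    rw [← hedgesplit]
    exact hC'.isTrail.edges_nodup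
  have htailnd : (p.support.tail ++ q.support.tail).Nodup := by
    rw [← tail_support_append, hspec]
    exact hC'.2
  have hxny : x ≠ y := hxy.ne
  have hpnil : ¬ p.Nil := Walk.not_nil_of_ne hxny
  have hqnil : ¬ q.Nil := Walk.not_nil_of_ne (Ne.symm hxny)
  have hxqt : x ∈ q.support.tail := aux_end_mem_tail_support q hqnil
  have hypt : y ∈ p.support.tail := aux_end_mem_tail_support p hpnil
  have hndsplit := List.nodup_append.mp htailnd
  have hppath : p.IsPath := by
    rw [isPath_def, support_eq_cons, List.nodup_cons]
    refine ⟨fun hmem => ?_, hndsplit.1⟩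
    exact (hndsplit.2.2 x hmem x hxqt rfl)
  have hqpath : q.IsPath := by
    rw [isPath_def, support_eq_cons, List.nodup_cons]
    refine ⟨fun hmem => ?_, hndsplit.2.1⟩
    exact (hndsplit.2.2 y hypt y hmem rfl)
  have hpe : ∀ e : Sym2 V, e ∈ p.edges → e ∈ C.edges := fun e he =>
    (hedgesC' e).1 (edges_takeUntil_subset C' hy' he)
  have hqe : ∀ e : Sym2 V, e ∈ q.edges → e ∈ C.edges := fun e he =>
    (hedgesC' e).1 (edges_dropUntil_subset C' hy' he)
  have hchp : s(x, y) ∉ p.edges := fun h => hchord (hpe _ h)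
  have hchq : s(x, y) ∉ q.edges := fun h => hchord (hqe _ h)
  have hcyc1 : (Walk.cons hxy.symm p).IsCycle := by
    rw [cons_isCycle_iff]
    refine ⟨hppath, fun h => hchp ?_⟩
    rwa [Sym2.eq_swap] at h
  have hcyc2 : (Walk.cons hxy q).IsCycle := by
    rw [cons_isCycle_iff]
    exact ⟨hqpath, hchq⟩
  have hlensum : p.length + q.length = C.length := by
    rw [← length_append, hspec, hC'def, aux_length_rotate]
  have hplen : 2 ≤ p.length := by
    rcases Nat.lt_or_ge p.length 2 with h | h
    · exfalso
      interval_cases h' : p.length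
      · exact hxny (p.eq_of_length_eq_zero h')
      · exact hchp (aux_edge_of_length_one p h')
    · exact h
  have hqlen : 2 ≤ q.length := by
    rcases Nat.lt_or_ge q.length 2 with h | h
    · exfalso
      interval_cases h' : q.length
      · exact hxny (q.eq_of_length_eq_zero h').symm
      · have := aux_edge_of_length_one q h'
        rw [Sym2.eq_swap] at this
        exact hchq this
    · exact h
  refine ⟨p, q, hcyc1, hcyc2, hlensum, hplen, hqlen, ?_, ?_, ?_, ?_, ?_⟩
  · intro e
    rw [← hedgesC' e, hedgesplit, List.mem_append]
  · intro e hep heq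
    exact (List.disjoint_of_nodup_append hednodup) hep heq
  · intro u hu
    exact (hmemsup u).1 (support_takeUntil_subset C' hy' hu)
  · intro u hu
    exact (hmemsup u).1 (support_dropUntil_subset C' hy' hu)
  · intro u hup huq
    by_cases h1 : u = x
    · exact Or.inl h1
    by_cases h2 : u = y
    · exact Or.inr h2
    exfalso
    have hup' : u ∈ p.support.tail := by
      rw [support_eq_cons, List.mem_cons] at hup
      rcases hup with h | h
      · exact absurd h h1
      · exact h
    have huq' : u ∈ q.support.tail := by
      rw [support_eq_cons, List.mem_cons] at huq
      rcases huq with h | h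
      · exact absurd h h2
      · exact h
    exact hndsplit.2.2 u hup' u huq' rfl

open Classical in
/-- Key lemma: in a graph satisfying the triangle condition with respect to `G'`,
any cycle of length at least 4 having no chord belonging to `G'` has its
characteristic vector in the hole space. -/
lemma aux_key (G G' : SimpleGraph V)
    (htri : ∀ x y z : V, G.Adj x y → G.Adj x z → G.Adj y z → G'.Adj x y) :
    ∀ (n : ℕ) (v : V) (C : G.Walk v v), C.length ≤ n → C.IsCycle → 4 ≤ C.length →
      (∀ x y : V, x ∈ C.support → y ∈ C.support → G'.Adj x y → s(x, y) ∈ C.edges) →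
      cycleVec G C ∈ holeSpace G := by
  classical
  intro n
  induction n with
  | zero => intro v C h1 _ h4 _; omega
  | succ n ih =>
    intro v C hlen hC h4 hG'
    by_cases hhole : ∀ x y : V, x ∈ C.support → y ∈ C.support → G.Adj x y → s(x, y) ∈ C.edges
    · exact Submodule.subset_span ⟨v, C, ⟨hC, h4, hhole⟩, rfl⟩
    · push_neg at hhole
      obtain ⟨x, y, hx, hy, hxy, hchord⟩ := hhole
      obtain ⟨p, q, hc1, hc2, hlensum, hp2, hq2, hsplit, hdisj, hps, hqs, hinter⟩ :=
        aux_split_cycle C hC hx hy hxy hchord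
      have hnxy : ¬ G'.Adj x y := fun h => hchord (hG' x y hx hy h)
      have hp3 : 3 ≤ p.length := by
        rcases Nat.lt_or_ge p.length 3 with h | h
        · exfalso
          have hp2' : p.length = 2 := by omega
          obtain ⟨z, hxz, hzy⟩ := aux_mid_of_length_two p hp2'
          exact hnxy (htri x y z hxy hxz hzy.symm)
        · exact h
      have hq3 : 3 ≤ q.length := by
        rcases Nat.lt_or_ge q.length 3 with h | h
        · exfalso
          have hq2' : q.length = 2 := by omega
          obtain ⟨z, hyz, hzx⟩ := aux_mid_of_length_two q hq2'
          exact hnxy (htri y x z hxy.symm hyz hzx.symm).symm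
        · exact h
      -- chord-freeness of the two subcycles with respect to G'
      have hH1 : ∀ c d : V, c ∈ (Walk.cons hxy.symm p).support →
          d ∈ (Walk.cons hxy.symm p).support → G'.Adj c d →
          s(c, d) ∈ (Walk.cons hxy.symm p).edges := by
        intro c d hc hd hcd
        have hc' : c ∈ p.support := by
          rw [Walk.support_cons, List.mem_cons] at hc
          rcases hc with rfl | h
          · exact p.end_mem_support
          · exact h
        have hd' : d ∈ p.support := by
          rw [Walk.support_cons, List.mem_cons] at hd
          rcases hd with rfl | h
          · exact p.end_mem_support
          · exact h
        have hmem := hG' c d (hps c hc') (hps d hd') hcd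
        rw [Walk.edges_cons]
        rcases (hsplit _).1 hmem with h | h
        · exact List.mem_cons_of_mem _ h
        · exfalso
          have hcq : c ∈ q.support := Walk.fst_mem_support_of_mem_edges q h
          have hdq : d ∈ q.support := Walk.snd_mem_support_of_mem_edges q h
          rcases hinter c hc' hcq with rfl | rfl
          · rcases hinter d hd' hdq with rfl | rfl
            · exact hcd.ne rfl
            · exact hnxy hcd
          · rcases hinter d hd' hdq with rfl | rfl
            · exact hnxy hcd.symm
            · exact hcd.ne rfl
      have hH2 : ∀ c d : V, c ∈ (Walk.cons hxy q).support →
          d ∈ (Walk.cons hxy q).support → G'.Adj c d →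
          s(c, d) ∈ (Walk.cons hxy q).edges := by
        intro c d hc hd hcd
        have hc' : c ∈ q.support := by
          rw [Walk.support_cons, List.mem_cons] at hc
          rcases hc with rfl | h
          · exact q.end_mem_support
          · exact h
        have hd' : d ∈ q.support := by
          rw [Walk.support_cons, List.mem_cons] at hd
          rcases hd with rfl | h
          · exact q.end_mem_support
          · exact h
        have hmem := hG' c d (hqs c hc') (hqs d hd') hcd
        rw [Walk.edges_cons]
        rcases (hsplit _).1 hmem with h | h
        · exfalso
          have hcp : c ∈ p.support := Walk.fst_mem_support_of_mem_edges p h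
          have hdp : d ∈ p.support := Walk.snd_mem_support_of_mem_edges p h
          rcases hinter c hcp hc' with rfl | rfl
          · rcases hinter d hdp hd' with rfl | rfl
            · exact hcd.ne rfl
            · exact hnxy hcd
          · rcases hinter d hdp hd' with rfl | rfl
            · exact hnxy hcd.symm
            · exact hcd.ne rfl
        · exact List.mem_cons_of_mem _ h
      have hm1 : cycleVec G (Walk.cons hxy.symm p) ∈ holeSpace G := by
        apply ih y (Walk.cons hxy.symm p) ?_ hc1 ?_ hH1
        · rw [Walk.length_cons]; omega
        · rw [Walk.length_cons]; omega
      have hm2 : cycleVec G (Walk.cons hxy q) ∈ holeSpace G := by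
        apply ih x (Walk.cons hxy q) ?_ hc2 ?_ hH2
        · rw [Walk.length_cons]; omega
        · rw [Walk.length_cons]; omega
      have hvec : cycleVec G C =
          cycleVec G (Walk.cons hxy.symm p) + cycleVec G (Walk.cons hxy q) := by
        funext e
        simp only [cycleVec, Pi.add_apply]
        rw [Walk.edges_cons, Walk.edges_cons]
        by_cases he : (e : Sym2 V) = s(x, y)
        · rw [if_neg (he ▸ hchord), if_pos (by rw [he, Sym2.eq_swap]; exact List.mem_cons_self),
            if_pos (by rw [he]; exact List.mem_cons_self)]
          decide
        · have h1 : ((e : Sym2 V) ∈ s(y, x) :: p.edges) ↔ (e : Sym2 V) ∈ p.edges := by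
            rw [List.mem_cons]
            constructor
            · rintro (h | h)
              · exact absurd (by rw [h, Sym2.eq_swap]) he
              · exact h
            · exact Or.inr
          have h2 : ((e : Sym2 V) ∈ s(x, y) :: q.edges) ↔ (e : Sym2 V) ∈ q.edges := by
            rw [List.mem_cons]
            constructor
            · rintro (h | h)
              · exact absurd h he
              · exact h
            · exact Or.inr
          rw [if_congr h1 rfl rfl, if_congr h2 rfl rfl, if_congr (hsplit (e : Sym2 V)) rfl rfl]
          by_cases hp : (e : Sym2 V) ∈ p.edges
          · rw [if_pos hp, if_neg (hdisj _ hp), if_pos (Or.inl hp)]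
            decide
          · by_cases hq : (e : Sym2 V) ∈ q.edges
            · rw [if_neg hp, if_pos hq, if_pos (Or.inr hq)]
              decide
            · rw [if_neg hp, if_neg hq, if_neg (by tauto)]
              decide
      rw [hvec]
      exact Submodule.add_mem _ hm1 hm2

open Classical in
/-- Main auxiliary lemma, with the augmented graph `H` as a variable. -/
lemma aux_main (G G' H : SimpleGraph V)
    (htri : ∀ x y z : V, G.Adj x y → G.Adj x z → G.Adj y z → G'.Adj x y)
    (a b : V) (hab' : ¬ G'.Adj a b)
    (hHG : H ≤ G) (hG'H : G' ≤ H) :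
    ∀ (v : V) (w : H.Walk v v), w.IsCycle → s(a, b) ∈ w.edges →
      (∀ (u : V) (w' : H.Walk u u),
        w'.IsCycle → s(a, b) ∈ w'.edges → w.length ≤ w'.length) →
      (w.IsCycle ∧ 4 ≤ w.length ∧
        (∀ x y : V, x ∈ w.support → y ∈ w.support → H.Adj x y → s(x, y) ∈ w.edges)) ∧
        cycleVec G w ∈ holeSpace G := by
  classical
  intro v w hw habmem hmin
  have h3 := hw.three_le_length
  have h4 : 4 ≤ w.length := by
    rcases Nat.lt_or_ge w.length 4 with hlt | hge
    swap
    · exact hge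
    exfalso
    have heq : w.length = 3 := by omega
    clear h3 hlt hmin
    cases w with
    | nil => simp at heq
    | cons h₁ w₁ =>
      rename_i c
      cases w₁ with
      | nil => simp at heq
      | cons h₂ w₂ =>
        rename_i d
        cases w₂ with
        | nil => simp at heq
        | cons h₃ w₃ =>
          cases w₃ with
          | cons h₄ w₄ =>
            simp only [SimpleGraph.Walk.length_cons] at heq
            omega
          | nil =>
            have hG₁ : G.Adj v c := hHG h₁
            have hG₂ : G.Adj c d := hHG h₂
            have hG₃ : G.Adj d v := hHG h₃
            have hvc : G'.Adj v c := htri v c d hG₁ hG₃.symm hG₂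
            have hcd : G'.Adj c d := htri c d v hG₂ hG₁.symm hG₃
            have hdv : G'.Adj d v := htri d v c hG₃ hG₂.symm hG₁
            simp only [SimpleGraph.Walk.edges_cons, SimpleGraph.Walk.edges_nil,
              List.mem_cons, List.not_mem_nil, or_false] at habmem
            rcases habmem with h | h | h
            · rcases Sym2.eq_iff.mp h with ⟨rfl, rfl⟩ | ⟨rfl, rfl⟩
              · exact hab' hvc
              · exact hab' hvc.symm
            · rcases Sym2.eq_iff.mp h with ⟨rfl, rfl⟩ | ⟨rfl, rfl⟩
              · exact hab' hcd
              · exact hab' hcd.symm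
            · rcases Sym2.eq_iff.mp h with ⟨rfl, rfl⟩ | ⟨rfl, rfl⟩
              · exact hab' hdv
              · exact hab' hdv.symm
  have hchordless : ∀ x y : V, x ∈ w.support → y ∈ w.support → H.Adj x y →
      s(x, y) ∈ w.edges := by
    intro x y hx hy hxy
    by_contra hchord
    obtain ⟨p, q, hc1, hc2, hlensum, hp2, hq2, hsplit, hdisj, hps, hqs, hinter⟩ :=
      aux_split_cycle w hw hx hy hxy hchord
    rcases (hsplit s(a, b)).1 habmem with h | h
    · have := hmin y (SimpleGraph.Walk.cons hxy.symm p) hc1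
        (by rw [SimpleGraph.Walk.edges_cons]; exact List.mem_cons_of_mem _ h)
      rw [SimpleGraph.Walk.length_cons] at this
      omega
    · have := hmin x (SimpleGraph.Walk.cons hxy q) hc2
        (by rw [SimpleGraph.Walk.edges_cons]; exact List.mem_cons_of_mem _ h)
      rw [SimpleGraph.Walk.length_cons] at this
      omega
  refine ⟨⟨hw, h4, hchordless⟩, ?_⟩
  have hid : ⇑(SimpleGraph.Hom.ofLE hHG) = id := rfl
  set W : G.Walk v v := w.mapLe hHG with hWdef
  have hWc : W.IsCycle := hw.mapLe hHG
  have hedges : W.edges = w.edges := by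
    rw [hWdef, SimpleGraph.Walk.mapLe, SimpleGraph.Walk.edges_map, hid]
    simp [Sym2.map_id']
  have hsupp : W.support = w.support := by
    rw [hWdef, SimpleGraph.Walk.mapLe, SimpleGraph.Walk.support_map, hid]
    simp
  have hlenW : W.length = w.length := by
    rw [hWdef, SimpleGraph.Walk.mapLe, SimpleGraph.Walk.length_map]
  have hmem : cycleVec G W ∈ holeSpace G := by
    apply aux_key G G' htri W.length v W le_rfl hWc (by omega)
    intro x y hx hy hxy'
    rw [hsupp] at hx hy
    rw [hedges]
    exact hchordless x y hx hy (hG'H hxy')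
  have hvec : cycleVec G w = cycleVec G W := by
    funext e
    simp only [cycleVec, hedges]
  rw [hvec]
  exact hmem

end Aux

open Classical in
/-- Let `G` be a connected graph with a connected spanning
subgraph `G'` containing all the triangles of `G`, with `G'` chordal, and let
`e = ab ∈ E(G) \ E(G')`.  Then a shortest cycle of `G' + e` containing `e` is a
hole of `G' + e`, and its characteristic vector lies in the hole space of `G`. -/
theorem stmt18 {V : Type*} [Fintype V] (G G' : SimpleGraph V)
    (hG : G.Connected) (hle : G' ≤ G) (hconn' : G'.Connected)
    (htri : ∀ x y z : V, G.Adj x y → G.Adj x z → G.Adj y z → G'.Adj x y)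
    (hchordal : IsChordalGraph G')
    (a b : V) (hab : G.Adj a b) (hab' : ¬ G'.Adj a b) :
    ∀ (v : V) (w : (G' ⊔ SimpleGraph.fromEdgeSet {s(a, b)}).Walk v v),
      w.IsCycle → s(a, b) ∈ w.edges →
      (∀ (u : V) (w' : (G' ⊔ SimpleGraph.fromEdgeSet {s(a, b)}).Walk u u),
        w'.IsCycle → s(a, b) ∈ w'.edges → w.length ≤ w'.length) →
      IsHole (G' ⊔ SimpleGraph.fromEdgeSet {s(a, b)}) w ∧
        cycleVec G w ∈ holeSpace G := by
  have hHG : (G' ⊔ SimpleGraph.fromEdgeSet {s(a, b)}) ≤ G := by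
    apply sup_le hle
    intro u₁ u₂ h
    rw [SimpleGraph.fromEdgeSet_adj] at h
    have h1 := h.1
    simp only [Set.mem_singleton_iff] at h1
    rcases Sym2.eq_iff.mp h1 with ⟨rfl, rfl⟩ | ⟨rfl, rfl⟩
    · exact hab
    · exact hab.symm
  intro v w hw habmem hmin
  obtain ⟨⟨hc, h4, hcl⟩, hmem⟩ :=
    aux_main G G' (G' ⊔ SimpleGraph.fromEdgeSet {s(a, b)}) htri a b hab' hHG
      le_sup_left v w hw habmem hmin
  exact ⟨⟨hc, h4, hcl⟩, hmem⟩
end
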